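/- Let n ≥ 1, let x : Fin n → ℝ be a sequence of n real values, and let H ⊆ Fin n be a nonempty set of 'honest' indices such that the number of remaining ('Byzantine') indices f = n − |H| satisfies f ≤ ⌈n/2⌉ − 1. If m ∈ ℝ is a median of the sequence, in the sense that #{i : x i ≤ m} ≥ ⌈n/2⌉ and #{i : x i ≥ m} ≥ ⌈n/2⌉, then min_{i ∈ H} x i ≤ m ≤ max_{i ∈ H} x i. -/
import Mathlib

lemma honest_witness {n : ℕ} (hn : 1 ≤ n) (H S : Finset (Fin n))
    (hf : n - H.card ≤ (n + 1) / 2 - 1)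
    (hS : (n + 1) / 2 ≤ S.card) : (S ∩ H).Nonempty := by
  rw [← Finset.card_pos]
  have h1 : (S \ H).card ≤ n - H.card := by
    have := Finset.card_le_card (Finset.sdiff_subset_sdiff (Finset.subset_univ S) (le_refl H))
    simpa [Finset.card_sdiff_of_subset (Finset.subset_univ H)] using this
  have h2 : S.card ≤ (S ∩ H).card + (S \ H).card := by
    rw [Finset.card_inter_add_card_sdiff]
  have h3 : 1 ≤ (n + 1) / 2 := Nat.one_le_div_iff (by norm_num) |>.mpr (by omega)
  omega

/-- A median of a sequence with a dominating honest subset lies between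
the minimum and the maximum of the honest values. -/
theorem median_between_honest_min_max
    (n : ℕ) (hn : 1 ≤ n) (x : Fin n → ℝ)
    (H : Finset (Fin n)) (hH : H.Nonempty)
    (hf : n - H.card ≤ (n + 1) / 2 - 1)
    (m : ℝ)
    (hle : (n + 1) / 2 ≤ (Finset.univ.filter (fun i => x i ≤ m)).card)
    (hge : (n + 1) / 2 ≤ (Finset.univ.filter (fun i => m ≤ x i)).card) :
    H.inf' hH x ≤ m ∧ m ≤ H.sup' hH x := by
  constructor
  · obtain ⟨i, hi⟩ := honest_witness hn H _ hf hle
    rw [Finset.mem_inter, Finset.mem_filter] at hi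
    exact le_trans (Finset.inf'_le x hi.2) hi.1.2
  · obtain ⟨i, hi⟩ := honest_witness hn H _ hf hge
    rw [Finset.mem_inter, Finset.mem_filter] at hi
    exact le_trans hi.1.2 (Finset.le_sup' x hi.2)
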